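/- For fixed u, v > 0, the map (A, K) ↦ tr((A+u)^{−1} K* (B+v)^{−1} K) is jointly convex in (A, K) for each fixed positive semidefinite B, where A ranges over positive semidefinite operators and K over all operators on a finite-dimensional Hilbert space. -/

import Mathlib

open Matrix
open scoped ComplexOrder

namespace AuxTRJC

variable {m : Type*} [Fintype m] [DecidableEq m]

lemma smul_one_posDef {u : ℝ} (hu : 0 < u) :
    ((u:ℂ) • (1 : Matrix m m ℂ)).PosDef := by
  rw [smul_one_eq_diagonal]
  exact posDef_diagonal_iff.mpr fun _ => by exact_mod_cast hu

lemma psd_smul {c : ℝ} (hc : 0 ≤ c) {M : Matrix m m ℂ} (hM : M.PosSemidef) :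
    (c • M).PosSemidef := by
  have hre : c • M = (c:ℂ) • M := by
    ext i j; simp [Complex.real_smul]
  rw [hre]
  rw [posSemidef_iff_dotProduct_mulVec]
  constructor
  · unfold Matrix.IsHermitian
    rw [conjTranspose_smul, hM.1, Complex.star_def, Complex.conj_ofReal]
  · intro x
    have h := hM.dotProduct_mulVec_nonneg x
    have : star x ⬝ᵥ ((c:ℂ) • M) *ᵥ x = (c:ℂ) * (star x ⬝ᵥ M *ᵥ x) := by
      rw [smul_mulVec, dotProduct_smul, smul_eq_mul]
    rw [this]
    exact mul_nonneg (by exact_mod_cast hc) h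

lemma trace_nonneg {M : Matrix m m ℂ} (hM : M.PosSemidef) : 0 ≤ M.trace := by
  rw [Matrix.trace]
  apply Finset.sum_nonneg
  intro i _
  have h := hM.dotProduct_mulVec_nonneg (Pi.single i 1)
  simpa [dotProduct, Matrix.mulVec, Pi.single_apply, Matrix.diag] using h

lemma trace_mul_nonneg {P Q : Matrix m m ℂ} (hP : P.PosSemidef) (hQ : Q.PosSemidef) :
    0 ≤ (P * Q).trace := by
  obtain ⟨Y, hY, -, rfl⟩ := open scoped MatrixOrder in
    CFC.exists_sqrt_of_isSelfAdjoint_of_quasispectrumRestricts hQ.isHermitian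
      (QuasispectrumRestricts.nnreal_of_nonneg hQ.nonneg)
  nth_rewrite 1 [← hY.star_eq, star_eq_conjTranspose]
  have : (P * (Yᴴ * Y)).trace = (Y * P * Yᴴ).trace := by
    rw [← Matrix.mul_assoc, Matrix.trace_mul_cycle]
  rw [this]
  exact trace_nonneg (hP.mul_mul_conjTranspose_same Y)

lemma block_psd {A : Matrix m m ℂ} (hA : A.PosDef) (K : Matrix m m ℂ) :
    (fromBlocks A Kᴴ K (K * A⁻¹ * Kᴴ)).PosSemidef := by
  haveI := hA.isUnit.invertible
  have h := (PosDef.fromBlocks₁₁ (A := A) Kᴴ (K * A⁻¹ * Kᴴ) hA).mpr ?_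
  · simpa using h
  · simp only [conjTranspose_conjTranspose]
    simp [Matrix.mul_assoc]
    exact PosSemidef.zero

lemma trace_ABCD (X Y Z W : Matrix m m ℂ) :
    (X * Y * Z * W).trace = (Z * (W * X * Y)).trace := by
  rw [Matrix.trace_mul_cycle (X * Y) Z W, Matrix.trace_mul_comm (W * (X * Y)) Z,
    ← Matrix.mul_assoc W X Y]

end AuxTRJC

/-- For fixed `u, v > 0` and a fixed positive semidefinite `B`, the map
`(A, K) ↦ tr((A+u)⁻¹ K* (B+v)⁻¹ K)` is jointly convex in `(A, K)` on positive
semidefinite `A` and arbitrary `K`. -/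
theorem trace_resolvent_jointly_convex_in_A_K {n : ℕ} (u v : ℝ) (hu : 0 < u) (hv : 0 < v)
    (B : Matrix (Fin n) (Fin n) ℂ) (hB : B.PosSemidef)
    (A₁ A₂ : Matrix (Fin n) (Fin n) ℂ) (hA₁ : A₁.PosSemidef) (hA₂ : A₂.PosSemidef)
    (K₁ K₂ : Matrix (Fin n) (Fin n) ℂ) :
    (((((1:ℝ)/2) • (A₁ + A₂) + (u:ℂ) • 1)⁻¹) *
          (((1:ℂ)/2) • (K₁ + K₂))ᴴ * (B + (v:ℂ) • 1)⁻¹ * (((1:ℂ)/2) • (K₁ + K₂))).trace ≤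
      ((1:ℂ)/2) * (((A₁ + (u:ℂ) • 1)⁻¹ * K₁ᴴ * (B + (v:ℂ) • 1)⁻¹ * K₁).trace +
        ((A₂ + (u:ℂ) • 1)⁻¹ * K₂ᴴ * (B + (v:ℂ) • 1)⁻¹ * K₂).trace) := by
  open AuxTRJC in
  have hA₁' : (A₁ + (u:ℂ) • 1).PosDef := Matrix.PosDef.posSemidef_add hA₁ (smul_one_posDef hu)
  have hA₂' : (A₂ + (u:ℂ) • 1).PosDef := Matrix.PosDef.posSemidef_add hA₂ (smul_one_posDef hu)
  set M := (B + (v:ℂ) • 1)⁻¹ with hMdef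
  have hM : M.PosSemidef :=
    (Matrix.PosDef.posSemidef_add hB (smul_one_posDef hv)).inv.posSemidef
  set Kb : Matrix (Fin n) (Fin n) ℂ := ((1:ℝ)/2) • (K₁ + K₂) with hKb
  set Ab : Matrix (Fin n) (Fin n) ℂ := ((1:ℝ)/2) • (A₁ + A₂) + (u:ℂ) • 1 with hAb
  set D₁ : Matrix (Fin n) (Fin n) ℂ := K₁ * (A₁ + (u:ℂ) • 1)⁻¹ * K₁ᴴ with hD₁
  set D₂ : Matrix (Fin n) (Fin n) ℂ := K₂ * (A₂ + (u:ℂ) • 1)⁻¹ * K₂ᴴ with hD₂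
  set Db : Matrix (Fin n) (Fin n) ℂ := ((1:ℝ)/2) • (D₁ + D₂) with hDb
  have hAbpd : Ab.PosDef :=
    Matrix.PosDef.posSemidef_add (psd_smul (by norm_num) (hA₁.add hA₂)) (smul_one_posDef hu)
  haveI := hAbpd.isUnit.invertible
  -- the averaged block matrix is PSD
  have hsum : (fromBlocks Ab Kbᴴ Kb Db).PosSemidef := by
    have h1 := block_psd hA₁' K₁
    have h2 := block_psd hA₂' K₂
    have h := psd_smul (M := _) (by norm_num : (0:ℝ) ≤ (1:ℝ)/2) (h1.add h2)
    have e1 : ((1:ℝ)/2) • ((A₁ + (u:ℂ) • 1) + (A₂ + (u:ℂ) • 1)) = Ab := by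
      ext i j
      simp only [hAb, Matrix.add_apply, Matrix.smul_apply, Complex.real_smul,
        Matrix.smul_apply, Matrix.one_apply]
      split <;> push_cast <;> ring
    have e2 : ((1:ℝ)/2) • (K₁ᴴ + K₂ᴴ) = Kbᴴ := by
      ext i j
      simp only [hKb, Matrix.conjTranspose_apply, Matrix.add_apply, Matrix.smul_apply,
        Complex.real_smul, star_add, star_mul', Complex.star_def, Complex.conj_ofReal]
    have heq : ((1:ℝ)/2) • (fromBlocks (A₁ + (u:ℂ) • 1) K₁ᴴ K₁ D₁ +
        fromBlocks (A₂ + (u:ℂ) • 1) K₂ᴴ K₂ D₂) = fromBlocks Ab Kbᴴ Kb Db := by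
      rw [Matrix.fromBlocks_add, Matrix.fromBlocks_smul, e1, e2, hKb, hDb]
    rw [← heq]
    exact h
  -- Schur complement of the average
  have hschur : (Db - Kb * Ab⁻¹ * Kbᴴ).PosSemidef := by
    have := (Matrix.PosDef.fromBlocks₁₁ (A := Ab) Kbᴴ Db hAbpd).mp ?_
    · simpa using this
    · simpa using hsum
  have key : 0 ≤ (M * (Db - Kb * Ab⁻¹ * Kbᴴ)).trace := trace_mul_nonneg hM hschur
  rw [Matrix.mul_sub, Matrix.trace_sub, sub_nonneg] at key
  -- identify LHS
  have hKbc : (((1:ℂ)/2) • (K₁ + K₂)) = Kb := by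
    ext i j
    simp [hKb, Matrix.smul_apply, smul_eq_mul, Complex.real_smul]
    ring
  rw [hKbc]
  have hLHS : (Ab⁻¹ * Kbᴴ * M * Kb).trace = (M * (Kb * Ab⁻¹ * Kbᴴ)).trace := by
    rw [trace_ABCD Ab⁻¹ Kbᴴ M Kb, Matrix.mul_assoc Kb Ab⁻¹ Kbᴴ]
  rw [hLHS]
  -- identify RHS with trace (M * Db)
  have h1 : ((A₁ + (u:ℂ) • 1)⁻¹ * K₁ᴴ * M * K₁).trace = (M * D₁).trace := by
    rw [trace_ABCD (A₁ + (u:ℂ) • 1)⁻¹ K₁ᴴ M K₁, hD₁, Matrix.mul_assoc K₁ _ K₁ᴴ]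
  have h2 : ((A₂ + (u:ℂ) • 1)⁻¹ * K₂ᴴ * M * K₂).trace = (M * D₂).trace := by
    rw [trace_ABCD (A₂ + (u:ℂ) • 1)⁻¹ K₂ᴴ M K₂, hD₂, Matrix.mul_assoc K₂ _ K₂ᴴ]
  have hDbtr : (M * Db).trace = ((1:ℂ)/2) * ((M * D₁).trace + (M * D₂).trace) := by
    rw [hDb, Matrix.mul_smul, Matrix.mul_add, Matrix.trace_smul, Matrix.trace_add]
    simp [Complex.real_smul]
    ring
  rw [h1, h2, ← hDbtr]
  exact key
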